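/- Let f : X → Y be a compact-preserving function from a Fréchet space X in which convergent sequences have unique limits, to a Hausdorff space Y. Then the set SI_f of points at which f is sequentially infinite is closed in X. -/

import Mathlib

open Filter Topology Set

def CompactPreserving {X Y : Type*} [TopologicalSpace X] [TopologicalSpace Y]
    (f : X → Y) : Prop := ∀ K : Set X, IsCompact K → IsCompact (f '' K)

def SIset {X Y : Type*} [TopologicalSpace X] (f : X → Y) : Set X :=
  {x | ∃ u : ℕ → X, Filter.Tendsto u Filter.atTop (𝓝 x) ∧ (Set.range (fun n => f (u n))).Infinite}

/-- Convergent sequences have unique limits. -/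
def SeqHausdorff (X : Type*) [TopologicalSpace X] : Prop :=
  ∀ (u : ℕ → X) (a b : X), Filter.Tendsto u Filter.atTop (𝓝 a) →
    Filter.Tendsto u Filter.atTop (𝓝 b) → a = b

private lemma inj_nat_tendsto {φ : ℕ → ℕ} (h : Function.Injective φ) :
    Tendsto φ atTop atTop := by
  rw [← Nat.cofinite_eq_atTop]; exact h.tendsto_cofinite

/-- pigeonhole: an infinite set of naturals mapping into a finite set has an infinite fiber -/
private lemma pigeon {β : Type*} {K : Set ℕ} (hK : K.Infinite) {g : ℕ → β} {Q : Set β}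
    (hQ : Q.Finite) (hg : ∀ k ∈ K, g k ∈ Q) : ∃ b ∈ Q, {k | g k = b}.Infinite := by
  by_contra h
  push_neg at h
  have hfin : (⋃ b ∈ Q, {k | g k = b}).Finite := by
    refine hQ.biUnion (fun b hb => ?_)
    rcases (h b hb) with hb'
    · exact hb'
  exact hK (hfin.subset (fun k hk => Set.mem_biUnion (hg k hk) rfl))

/-- refinement of a witness sequence: injective `f`-values, all avoiding `f x`. -/
private lemma refine_witness {X Y : Type*} [TopologicalSpace X] (f : X → Y) (x : X) {a : X}
    (h : a ∈ SIset f) : ∃ v : ℕ → X, Tendsto v atTop (𝓝 a) ∧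
      Function.Injective (fun j => f (v j)) ∧ ∀ j, f (v j) ≠ f x := by
  obtain ⟨u, hu, hinf⟩ := h
  have hS : (Set.range (fun n => f (u n)) \ {f x}).Infinite :=
    hinf.diff (Set.finite_singleton _)
  let e := hS.natEmbedding
  have hchoice : ∀ j : ℕ, ∃ k, f (u k) = (e j : Y) := fun j => (e j).2.1
  choose φ hφ using hchoice
  have hφinj : Function.Injective φ := by
    intro j j' hjj'
    have : (e j : Y) = (e j' : Y) := by rw [← hφ j, ← hφ j', hjj']
    exact e.injective (Subtype.ext this)
  refine ⟨u ∘ φ, hu.comp (inj_nat_tendsto hφinj), ?_, ?_⟩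
  · intro j j' hjj'
    simp only [Function.comp] at hjj'
    apply e.injective
    apply Subtype.ext
    rw [← hφ j, ← hφ j']
    exact hjj'
  · intro j
    have := (e j).2.2
    simp only [Function.comp, hφ j]
    simpa using this

theorem stmt6 {X Y : Type*} [TopologicalSpace X] [TopologicalSpace Y]
    [FrechetUrysohnSpace X] [T2Space Y] (hX : SeqHausdorff X)
    (f : X → Y) (hf : CompactPreserving f) :
    IsClosed (SIset f) := by
  apply IsSeqClosed.isClosed
  intro xs x hxs hxlim
  by_contra hx
  -- refine the witness sequences at each xs n
  have H : ∀ n, ∃ v : ℕ → X, Tendsto v atTop (𝓝 (xs n)) ∧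
      Function.Injective (fun j => f (v j)) ∧ ∀ j, f (v j) ≠ f x :=
    fun n => refine_witness f x (hxs n)
  choose v hvt hvinj hvne using H
  -- the countable set of values
  set V : Set Y := Set.range (fun p : ℕ × ℕ => f (v p.1 p.2)) with hVdef
  have hVc : V.Countable := Set.countable_range _
  have hVne : V.Nonempty := ⟨f (v 0 0), ⟨(0, 0), rfl⟩⟩
  obtain ⟨z, hz⟩ := hVc.exists_eq_range hVne
  -- positions of values in columns
  classical
  set d : ℕ → ℕ → ℕ := fun n i => if h : ∃ j, f (v n j) = z i then h.choose else 0 with hddef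
  set r : ℕ → ℕ := fun n => ((Finset.range (n + 1)).sup (d n)) + 1 with hrdef
  -- key position lemma
  have hpos : ∀ n j i, r n ≤ j → f (v n j) = z i → n < i := by
    intro n j i hrj hval
    by_contra hni
    push_neg at hni
    have hex : ∃ j', f (v n j') = z i := ⟨j, hval⟩
    have hd : f (v n (d n i)) = z i := by
      simp only [hddef, dif_pos hex]
      exact hex.choose_spec
    have hj : j = d n i := hvinj n (hval.trans hd.symm)
    have h1 : d n i ≤ (Finset.range (n + 1)).sup (d n) :=
      Finset.le_sup (Finset.mem_range.mpr (Nat.lt_succ_of_le hni))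
    have h2 : r n = ((Finset.range (n + 1)).sup (d n)) + 1 := rfl
    omega
  -- the set P of deep tail points
  set P : Set X := {p : X | ∃ n j, r n ≤ j ∧ v n j = p} with hPdef
  have hxnP : ∀ n, xs n ∈ closure P := by
    intro n
    have ht : Tendsto (fun j => v n (j + r n)) atTop (𝓝 (xs n)) :=
      (hvt n).comp (tendsto_add_atTop_nat (r n))
    exact mem_closure_of_tendsto ht
      (Filter.Eventually.of_forall fun j => ⟨n, j + r n, Nat.le_add_left _ _, rfl⟩)
  have hxP : x ∈ closure P := by
    have := mem_closure_of_tendsto hxlim (Filter.Eventually.of_forall hxnP)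
    rwa [closure_closure] at this
  obtain ⟨t, htP, htlim⟩ := mem_closure_iff_seq_limit.mp hxP
  -- f ∘ t has finite range since x ∉ SIset f
  have hfin : (Set.range (fun k => f (t k))).Finite := by
    by_contra h
    exact hx ⟨t, htlim, h⟩
  -- pigeonhole: some value w attained infinitely often
  obtain ⟨w, -, hw⟩ := pigeon Set.infinite_univ hfin (fun k _ => Set.mem_range_self k)
  -- w ∈ V and w ≠ f x
  obtain ⟨k₀, hk₀⟩ := hw.nonempty
  obtain ⟨n₀, j₀, hj₀, hvj₀⟩ := htP k₀
  have hwV : w ∈ V := ⟨(n₀, j₀), by simp only []; rw [hvj₀]; exact hk₀⟩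
  have hwne : w ≠ f x := by
    rw [← hk₀, ← hvj₀]; exact hvne n₀ j₀
  obtain ⟨i, hi⟩ : ∃ i, z i = w := by rw [hz] at hwV; exact hwV
  -- the set Q of points of P with value w is finite
  set Q : Set X := {p : X | p ∈ P ∧ f p = w} with hQdef
  have hQsub : Q ⊆ (fun n => v n (d n i)) '' (Set.Iio i) := by
    rintro p ⟨⟨n, j, hrj, rfl⟩, hfp⟩
    have hval : f (v n j) = z i := by rw [hfp, hi]
    have hni : n < i := hpos n j i hrj hval
    have hex : ∃ j', f (v n j') = z i := ⟨j, hval⟩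
    have hd : f (v n (d n i)) = z i := by
      simp only [hddef, dif_pos hex]
      exact hex.choose_spec
    have hj : j = d n i := hvinj n (hval.trans hd.symm)
    exact ⟨n, hni, by rw [hj]⟩
  have hQfin : Q.Finite := (Set.finite_Iio i).image _ |>.subset hQsub
  -- pigeonhole on the infinite fiber of w: some single point p repeats
  have htQ : ∀ k ∈ {k | f (t k) = w}, t k ∈ Q := fun k hk => ⟨htP k, hk⟩
  obtain ⟨p, hpQ, hp⟩ := pigeon hw hQfin htQ
  -- extract a subsequence constantly equal to p, converging to x
  let ψ := hp.natEmbedding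
  have hψinj : Function.Injective (fun m => (ψ m : ℕ)) :=
    fun m m' h => ψ.injective (Subtype.ext h)
  have h1 : Tendsto (fun m => t (ψ m : ℕ)) atTop (𝓝 x) :=
    htlim.comp (inj_nat_tendsto hψinj)
  have h2 : Tendsto (fun m => t (ψ m : ℕ)) atTop (𝓝 p) := by
    have : ∀ m, t (ψ m : ℕ) = p := fun m => (ψ m).2
    rw [tendsto_congr this]
    exact tendsto_const_nhds
  have hpx : p = x := hX _ p x h2 h1
  exact hwne (by rw [← hpQ.2, hpx])
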